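/- Let k ≥ 1 and 0 ≤ j ≤ k−1, and let A be an invertible k×k matrix over F₂. Then A·G_{2^k−2^j} = G_{2^k−2^j}; that is, the sum of all monomials of degree 2^k−2^j in x_1,…,x_k whose nonzero exponents are powers of 2 is invariant under the action of GL_k(F₂) by linear substitution (it is the Dickson invariant c_{k,j} over F₂). -/

import Mathlib

open MvPolynomial

/-- `Vdm k t` is the determinant of the `k × k` matrix whose `(i, j)` entry is `xᵢ ^ t j`,
in `F₂[x₁, …, x_k]`. -/
noncomputable def Vdm (k : ℕ) (t : Fin k → ℕ) : MvPolynomial (Fin k) (ZMod 2) :=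
  Matrix.det (Matrix.of fun i j : Fin k => (X i : MvPolynomial (Fin k) (ZMod 2)) ^ t j)

/-- `D k = V(2^0, 2^1, …, 2^(k-1))`. -/
noncomputable def D (k : ℕ) : MvPolynomial (Fin k) (ZMod 2) :=
  Vdm k fun j => 2 ^ (j : ℕ)

/-- `N k ℓ j` is the Vandermonde determinant whose exponent tuple lists the 2-powers
`2^0, …, 2^(k-1)` with `2^j` omitted, followed by `2^ℓ`. -/
noncomputable def N (k ℓ j : ℕ) : MvPolynomial (Fin k) (ZMod 2) :=
  Vdm k fun i =>
    if (i : ℕ) + 1 < k then (if (i : ℕ) < j then 2 ^ (i : ℕ) else 2 ^ ((i : ℕ) + 1))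
    else 2 ^ ℓ

/- `G k m` is the sum of all monomials of total degree `m` in `x₁, …, x_k` in which
every nonzero exponent is a power of 2. -/
open Classical in
noncomputable def G (k m : ℕ) : MvPolynomial (Fin k) (ZMod 2) :=
  ∑ d : Fin k → Fin (m + 1),
    if (∑ i, (d i : ℕ)) = m ∧ ∀ i, (d i : ℕ) ≠ 0 → ∃ e, (d i : ℕ) = 2 ^ e then
      ∏ i, (X i : MvPolynomial (Fin k) (ZMod 2)) ^ (d i : ℕ)
    else 0

namespace Stmt13Aux

/-- binary digit sum -/
def bsum (n : ℕ) : ℕ :=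
  if h : n = 0 then 0 else bsum (n / 2) + n % 2
termination_by n
decreasing_by exact Nat.div_lt_self (Nat.pos_of_ne_zero h) one_lt_two

lemma bsum_zero : bsum 0 = 0 := by simp [bsum]

lemma bsum_ne {n : ℕ} (h : n ≠ 0) : bsum n = bsum (n/2) + n % 2 := by
  rw [bsum]; simp [h]

lemma bsum_one : bsum 1 = 1 := by
  rw [bsum_ne one_ne_zero]; simp [bsum_zero]

lemma bsum_pow (e : ℕ) : bsum (2 ^ e) = 1 := by
  induction e with
  | zero => exact bsum_one
  | succ e ih =>
    rw [bsum_ne (by positivity), pow_succ]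
    rw [Nat.mul_div_cancel _ (by norm_num), Nat.mul_mod_left, ih]

lemma bsum_add_le : ∀ n a b : ℕ, a + b ≤ n → bsum (a + b) ≤ bsum a + bsum b := by
  intro n
  induction n with
  | zero => intro a b h
            have : a = 0 ∧ b = 0 := by omega
            simp [this.1, this.2]
  | succ n ih =>
    intro a b hab
    rcases Nat.eq_zero_or_pos a with rfl | ha
    · simp
    rcases Nat.eq_zero_or_pos b with rfl | hb
    · simp
    have hA := Nat.div_add_mod a 2
    have hB := Nat.div_add_mod b 2
    have ha2 : a % 2 < 2 := Nat.mod_lt _ (by norm_num)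
    have hb2 : b % 2 < 2 := Nat.mod_lt _ (by norm_num)
    rw [bsum_ne (by omega : a + b ≠ 0), bsum_ne (by omega : a ≠ 0),
      bsum_ne (by omega : b ≠ 0)]
    by_cases hpar : a % 2 = 1 ∧ b % 2 = 1
    · -- both odd
      have h1 : (a + b) / 2 = a / 2 + (b / 2 + 1) := by omega
      have h2 : (a + b) % 2 = 0 := by omega
      rw [h1, h2]
      have e1 : a / 2 + (b / 2 + 1) ≤ n := by omega
      have e2 : b / 2 + 1 ≤ n := by omega
      calc bsum (a / 2 + (b / 2 + 1)) + 0
          ≤ bsum (a / 2) + bsum (b / 2 + 1) := by simpa using ih _ _ e1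
        _ ≤ bsum (a / 2) + (bsum (b / 2) + bsum 1) := by
            have := ih (b / 2) 1 e2
            omega
        _ = bsum (a / 2) + bsum (b / 2) + 1 := by rw [bsum_one]; ring
        _ ≤ bsum (a / 2) + a % 2 + (bsum (b / 2) + b % 2) := by omega
    · -- at most one odd
      have h1 : (a + b) / 2 = a / 2 + b / 2 := by omega
      have h2 : (a + b) % 2 = a % 2 + b % 2 := by omega
      rw [h1, h2]
      have e1 : a / 2 + b / 2 ≤ n := by omega
      have := ih (a / 2) (b / 2) e1
      omega

lemma bsum_sum_le {ι : Type*} (s : Finset ι) (f : ι → ℕ) :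
    bsum (∑ i ∈ s, f i) ≤ ∑ i ∈ s, bsum (f i) := by
  classical
  induction s using Finset.induction with
  | empty => simp [bsum_zero]
  | insert _ _ h ih =>
    rw [Finset.sum_insert h, Finset.sum_insert h]
    calc bsum (f _ + ∑ i ∈ _, f i) ≤ bsum (f _) + bsum (∑ i ∈ _, f i) :=
          bsum_add_le _ _ _ le_rfl
      _ ≤ _ := by omega

lemma bsum_pow_sub_one (t : ℕ) : bsum (2 ^ t - 1) = t := by
  induction t with
  | zero => simpa using bsum_zero
  | succ t ih =>
    have h2 : (2:ℕ) ^ (t+1) = 2 * 2 ^ t := by rw [pow_succ]; ring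
    have hp : (1:ℕ) ≤ 2 ^ t := Nat.one_le_two_pow
    rw [bsum_ne (by omega)]
    have hd : (2 ^ (t+1) - 1) / 2 = 2 ^ t - 1 := by omega
    have hm : (2 ^ (t+1) - 1) % 2 = 1 := by omega
    rw [hd, hm, ih]

lemma bsum_key : ∀ j k : ℕ, j < k → bsum (2 ^ k - 2 ^ j - 1) = k - 1 := by
  intro j
  induction j with
  | zero =>
    intro k hk
    rcases Nat.eq_or_lt_of_le hk with rfl | hk2
    · simp [bsum_zero]
    have h2 : (2:ℕ) ^ k = 2 * 2 ^ (k-1) := by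
      rw [← pow_succ']; congr 1; omega
    have hp : (2:ℕ) ^ (k-1) ≥ 2 := by
      calc (2:ℕ)^1 ≤ 2 ^ (k-1) := Nat.pow_le_pow_right (by norm_num) (by omega)
        _ = _ := by rfl
    rw [bsum_ne (by simpa using by omega)]
    have hd : (2 ^ k - 2 ^ 0 - 1) / 2 = 2 ^ (k-1) - 1 := by simp; omega
    have hm : (2 ^ k - 2 ^ 0 - 1) % 2 = 0 := by simp; omega
    rw [hd, hm, bsum_pow_sub_one]
    omega
  | succ j ih =>
    intro k hk
    have hjk : j < k - 1 := by omega
    have h2 : (2:ℕ) ^ k = 2 * 2 ^ (k-1) := by rw [← pow_succ']; congr 1; omega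
    have h3 : (2:ℕ) ^ (j+1) = 2 * 2 ^ j := by rw [pow_succ]; ring
    have hp : (2:ℕ) ^ j < 2 ^ (k-1) := Nat.pow_lt_pow_right (by norm_num) (by omega)
    have hp1 : (1:ℕ) ≤ 2 ^ j := Nat.one_le_two_pow
    rw [bsum_ne (by omega)]
    have hd : (2 ^ k - 2 ^ (j+1) - 1) / 2 = 2 ^ (k-1) - 2 ^ j - 1 := by omega
    have hm : (2 ^ k - 2 ^ (j+1) - 1) % 2 = 1 := by omega
    rw [hd, hm, ih (k-1) hjk]
    omega


lemma counting {k j : ℕ} (hj : j < k) {u v : Fin k} (huv : u ≠ v)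
    (d : Fin k → ℕ) (hsum : ∑ i, d i = 2 ^ k - 2 ^ j)
    (hpow : ∀ i, d i ≠ 0 → ∃ e, d i = 2 ^ e)
    (hu : d u = 1) (hv : d v = 0) : False := by
  classical
  have hk2 : 2 ≤ k := by
    have := u.isLt; have := v.isLt
    have : (u : ℕ) ≠ (v : ℕ) := fun h => huv (Fin.val_injective h)
    omega
  have hmlt : 2 ^ j < 2 ^ k := Nat.pow_lt_pow_right one_lt_two hj
  have hrest : ∑ i ∈ Finset.univ.erase u, d i = 2 ^ k - 2 ^ j - 1 := by
    have h := Finset.add_sum_erase Finset.univ d (Finset.mem_univ u)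
    omega
  have hb1 : bsum (2 ^ k - 2 ^ j - 1) = k - 1 := bsum_key j k hj
  have hb2 : bsum (∑ i ∈ Finset.univ.erase u, d i) ≤
      ∑ i ∈ Finset.univ.erase u, bsum (d i) := bsum_sum_le _ _
  have hvmem : v ∈ Finset.univ.erase u :=
    Finset.mem_erase.mpr ⟨Ne.symm huv, Finset.mem_univ v⟩
  have hb3 : ∑ i ∈ Finset.univ.erase u, bsum (d i)
      = bsum (d v) + ∑ i ∈ (Finset.univ.erase u).erase v, bsum (d i) :=
    (Finset.add_sum_erase _ _ hvmem).symm
  have hb4 : bsum (d v) = 0 := by rw [hv, bsum_zero]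
  have hb5 : ∑ i ∈ (Finset.univ.erase u).erase v, bsum (d i) ≤
      ((Finset.univ.erase u).erase v).card := by
    calc ∑ i ∈ (Finset.univ.erase u).erase v, bsum (d i)
        ≤ ∑ _i ∈ (Finset.univ.erase u).erase v, 1 := by
          refine Finset.sum_le_sum fun i _ => ?_
          rcases Nat.eq_zero_or_pos (d i) with h0 | h0
          · rw [h0, bsum_zero]; omega
          · obtain ⟨e, he⟩ := hpow i (by omega)
            rw [he, bsum_pow]
      _ = _ := by rw [Finset.sum_const, smul_eq_mul, mul_one]
  have hcard : ((Finset.univ.erase u).erase v).card = k - 2 := by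
    rw [Finset.card_erase_of_mem hvmem, Finset.card_erase_of_mem (Finset.mem_univ u)]
    simp only [Finset.card_univ, Fintype.card_fin]
    omega
  rw [hrest, hb1] at hb2
  omega

/-- the involution on exponent vectors -/
def iot {k m : ℕ} (u v : Fin k) (d : Fin k → Fin (m+1))
    (h : (d u : ℕ) + (d v : ℕ) ≤ m) : Fin k → Fin (m+1) := fun i =>
  if i = u then
    (if (d v : ℕ) = 0 then ⟨(d u : ℕ)/2, by have := (d u).isLt; omega⟩
     else if (d u : ℕ) = (d v : ℕ) then ⟨(d u : ℕ) + (d v : ℕ), by omega⟩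
     else d v)
  else if i = v then
    (if (d v : ℕ) = 0 then ⟨(d u : ℕ)/2, by have := (d u).isLt; omega⟩
     else if (d u : ℕ) = (d v : ℕ) then ⟨0, by omega⟩
     else d u)
  else d i

lemma iot_apply_u {k m : ℕ} (u v : Fin k) (d : Fin k → Fin (m+1))
    (h : (d u : ℕ) + (d v : ℕ) ≤ m) :
    (iot u v d h u : ℕ) = if (d v : ℕ) = 0 then (d u : ℕ)/2
      else if (d u : ℕ) = (d v : ℕ) then (d u : ℕ) + (d v : ℕ) else (d v : ℕ) := by
  simp only [iot, if_pos rfl]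
  split_ifs <;> rfl

lemma iot_apply_v {k m : ℕ} (u v : Fin k) (huv : u ≠ v) (d : Fin k → Fin (m+1))
    (h : (d u : ℕ) + (d v : ℕ) ≤ m) :
    (iot u v d h v : ℕ) = if (d v : ℕ) = 0 then (d u : ℕ)/2
      else if (d u : ℕ) = (d v : ℕ) then 0 else (d u : ℕ) := by
  simp only [iot, if_neg (Ne.symm huv), if_pos rfl]
  split_ifs <;> rfl

lemma iot_apply_ne {k m : ℕ} (u v : Fin k) (d : Fin k → Fin (m+1))
    (h : (d u : ℕ) + (d v : ℕ) ≤ m) {i : Fin k} (hiu : i ≠ u) (hiv : i ≠ v) :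
    iot u v d h i = d i := by
  simp only [iot, if_neg hiu, if_neg hiv]

lemma iot_props {k m : ℕ} {u v : Fin k} (huv : u ≠ v) (d : Fin k → Fin (m+1))
    (h : (d u : ℕ) + (d v : ℕ) ≤ m)
    (hpow : ∀ i, (d i : ℕ) ≠ 0 → ∃ e, (d i : ℕ) = 2 ^ e)
    (hu : (d u : ℕ) ≠ 0) (hne1 : ¬((d u : ℕ) = 1 ∧ (d v : ℕ) = 0)) :
    ((iot u v d h u : ℕ) + (iot u v d h v : ℕ) = (d u : ℕ) + (d v : ℕ))
    ∧ (∀ i, ((iot u v d h i : ℕ)) ≠ 0 → ∃ e, (iot u v d h i : ℕ) = 2 ^ e)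
    ∧ ((iot u v d h u : ℕ) ≠ 0)
    ∧ iot u v d h v ≠ d v
    ∧ (∀ h', iot u v (iot u v d h) h' = d) := by
  obtain ⟨e, he⟩ := hpow u hu
  have hU := iot_apply_u u v d h
  have hV := iot_apply_v u v huv d h
  have hpow2 : (d v : ℕ) = 0 →
      (d u : ℕ) = 2 * 2 ^ (e-1) ∧ (d u : ℕ)/2 = 2 ^ (e-1) ∧ 1 ≤ 2 ^ (e-1) := by
    intro h1
    have hene : e ≠ 0 := fun h0 => hne1 ⟨by rw [he, h0, pow_zero], h1⟩
    have h2 : 2 * 2^(e-1) = 2^e := by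
      rw [← pow_succ']; congr 1; omega
    have h3 : 1 ≤ 2^(e-1) := Nat.one_le_two_pow
    omega
  have hsum2 : (iot u v d h u : ℕ) + (iot u v d h v : ℕ) = (d u : ℕ) + (d v : ℕ) := by
    rw [hU, hV]
    by_cases hb : (d v : ℕ) = 0
    · have := hpow2 hb; split_ifs <;> omega
    · split_ifs <;> omega
  refine ⟨hsum2, ?_, ?_, ?_, ?_⟩
  · -- powers of two
    intro i hi
    by_cases hiu : i = u
    · rw [hiu] at hi ⊢
      rw [hU] at hi ⊢
      split_ifs at hi ⊢ with h1 h2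
      · exact ⟨e - 1, (hpow2 h1).2.1⟩
      · refine ⟨e + 1, ?_⟩
        have : (2:ℕ) ^ (e+1) = 2 ^ e * 2 := pow_succ 2 e
        omega
      · exact hpow v hi
    by_cases hiv : i = v
    · rw [hiv] at hi ⊢
      rw [hV] at hi ⊢
      split_ifs at hi ⊢ with h1 h2
      · exact ⟨e - 1, (hpow2 h1).2.1⟩
      · omega
      · exact hpow u hu
    · rw [iot_apply_ne u v d h hiu hiv] at hi ⊢
      exact hpow i hi
  · -- nonzero at u
    rw [hU]
    by_cases hb : (d v : ℕ) = 0
    · have := hpow2 hb; split_ifs <;> omega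
    · split_ifs <;> omega
  · -- not fixed at v
    intro hEq
    have hval := congrArg Fin.val hEq
    rw [hV] at hval
    by_cases hb : (d v : ℕ) = 0
    · have := hpow2 hb; split_ifs at hval <;> omega
    · split_ifs at hval <;> omega
  · -- involution
    intro h'
    funext i
    by_cases hiu : i = u
    · rw [hiu]
      apply Fin.val_injective
      rw [iot_apply_u u v _ h', hU, hV]
      by_cases hb : (d v : ℕ) = 0
      · have := hpow2 hb; split_ifs <;> omega
      · split_ifs <;> omega
    by_cases hiv : i = v
    · rw [hiv]
      apply Fin.val_injective
      rw [iot_apply_v u v huv _ h', hU, hV]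
      by_cases hb : (d v : ℕ) = 0
      · have := hpow2 hb; split_ifs <;> omega
      · split_ifs <;> omega
    · rw [iot_apply_ne u v _ h' hiu hiv, iot_apply_ne u v d h hiu hiv]

lemma sum_pair_congr {k : ℕ} {u v : Fin k} (huv : u ≠ v) (f g : Fin k → ℕ)
    (hfg : ∀ i, i ≠ u → i ≠ v → f i = g i) (hpair : f u + f v = g u + g v) :
    ∑ i, f i = ∑ i, g i := by
  classical
  have hvmem : v ∈ Finset.univ.erase u :=
    Finset.mem_erase.mpr ⟨Ne.symm huv, Finset.mem_univ v⟩
  have htail : ∑ i ∈ (Finset.univ.erase u).erase v, f i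
      = ∑ i ∈ (Finset.univ.erase u).erase v, g i := by
    refine Finset.sum_congr rfl fun i hi => ?_
    rw [Finset.mem_erase, Finset.mem_erase] at hi
    exact hfg i hi.2.1 hi.1
  have h1 := Finset.add_sum_erase Finset.univ f (Finset.mem_univ u)
  have h2 := Finset.add_sum_erase Finset.univ g (Finset.mem_univ u)
  have h3 := Finset.add_sum_erase _ f hvmem
  have h4 := Finset.add_sum_erase _ g hvmem
  omega


/-- admissibility predicate -/
def Pd (k m : ℕ) (d : Fin k → Fin (m+1)) : Prop :=
  (∑ i, (d i : ℕ)) = m ∧ ∀ i, (d i : ℕ) ≠ 0 → ∃ e, (d i : ℕ) = 2 ^ e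

open Classical in
lemma core {k j : ℕ} (hj : j < k) {u v : Fin k} (huv : u ≠ v) :
    aeval (fun a : Fin k => if a = u then (X u + X v : MvPolynomial (Fin k) (ZMod 2)) else X a)
        (G k (2 ^ k - 2 ^ j)) = G k (2 ^ k - 2 ^ j) := by
  classical
  set m := 2 ^ k - 2 ^ j with hm
  set f : Fin k → MvPolynomial (Fin k) (ZMod 2) :=
    fun a => if a = u then X u + X v else X a with hf
  have hfu : f u = X u + X v := by simp [hf]
  have hfi : ∀ a : Fin k, a ≠ u → f a = X a := by intro a ha; simp [hf, ha]
  have hvmem : v ∈ Finset.univ.erase u :=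
    Finset.mem_erase.mpr ⟨Ne.symm huv, Finset.mem_univ v⟩
  have hG : G k m = ∑ d ∈ Finset.univ.filter (fun d : Fin k → Fin (m+1) => Pd k m d),
      ∏ i, (X i : MvPolynomial (Fin k) (ZMod 2)) ^ (d i : ℕ) := by
    rw [Finset.sum_filter, G]
    exact Finset.sum_congr rfl fun d _ => if_congr Iff.rfl rfl rfl
  -- the correction term
  set T : (Fin k → Fin (m+1)) → MvPolynomial (Fin k) (ZMod 2) := fun d =>
    ∏ i, (X i : MvPolynomial (Fin k) (ZMod 2)) ^
      (if i = u then 0 else if i = v then (d u : ℕ) + (d v : ℕ) else (d i : ℕ)) with hT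
  -- pointwise step
  have step : ∀ d ∈ Finset.univ.filter (fun d : Fin k → Fin (m+1) => Pd k m d),
      (aeval f) (∏ i, (X i : MvPolynomial (Fin k) (ZMod 2)) ^ (d i : ℕ))
        = ∏ i, (X i : MvPolynomial (Fin k) (ZMod 2)) ^ (d i : ℕ)
          + (if (d u : ℕ) ≠ 0 then T d else 0) := by
    intro d hd
    have hPd : Pd k m d := (Finset.mem_filter.mp hd).2
    rw [map_prod]
    simp only [map_pow, aeval_X]
    by_cases hdu : (d u : ℕ) = 0
    · rw [if_neg (fun hc => hc hdu), add_zero]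
      refine Finset.prod_congr rfl fun i _ => ?_
      by_cases hiu : i = u
      · rw [hiu, hdu, pow_zero, pow_zero]
      · rw [hfi i hiu]
    · rw [if_pos hdu]
      obtain ⟨e, he⟩ := hPd.2 u hdu
      set Q := ∏ i ∈ (Finset.univ.erase u).erase v,
        (X i : MvPolynomial (Fin k) (ZMod 2)) ^ (d i : ℕ) with hQ
      have E1 : ∏ i, f i ^ (d i : ℕ)
          = (X u + X v) ^ (d u : ℕ) * (X v ^ (d v : ℕ) * Q) := by
        rw [← Finset.mul_prod_erase Finset.univ _ (Finset.mem_univ u),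
          ← Finset.mul_prod_erase _ _ hvmem, hfu, hfi v (Ne.symm huv)]
        congr 2
        exact Finset.prod_congr rfl fun i hi => by
          rw [hfi i (Finset.mem_erase.mp (Finset.mem_erase.mp hi).2).1]
      have E2 : ∏ i, (X i : MvPolynomial (Fin k) (ZMod 2)) ^ (d i : ℕ)
          = X u ^ (d u : ℕ) * (X v ^ (d v : ℕ) * Q) := by
        rw [← Finset.mul_prod_erase Finset.univ _ (Finset.mem_univ u),
          ← Finset.mul_prod_erase _ _ hvmem]
      have E3 : T d = X v ^ ((d u : ℕ) + (d v : ℕ)) * Q := by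
        simp only [hT]
        rw [← Finset.mul_prod_erase Finset.univ _ (Finset.mem_univ u),
          ← Finset.mul_prod_erase _ _ hvmem]
        rw [if_pos rfl, pow_zero, one_mul, if_neg (Ne.symm huv), if_pos rfl]
        congr 1
        exact Finset.prod_congr rfl fun i hi => by
          rw [if_neg (Finset.mem_erase.mp (Finset.mem_erase.mp hi).2).1,
            if_neg (Finset.mem_erase.mp hi).1]
      have hadd : (X u + X v : MvPolynomial (Fin k) (ZMod 2)) ^ (d u : ℕ)
          = X u ^ (d u : ℕ) + X v ^ (d u : ℕ) := by
        rw [he]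
        exact add_pow_char_pow _ _ 2 e
      rw [E1, E2, E3, hadd, add_mul]
      congr 1
      rw [← mul_assoc, ← pow_add]
  -- bound needed for iot
  have hle : ∀ d : Fin k → Fin (m+1), Pd k m d → (d u : ℕ) + (d v : ℕ) ≤ m := by
    intro d hPd
    have h1 : (d u : ℕ) + (d v : ℕ) = ∑ i ∈ ({u, v} : Finset (Fin k)), (d i : ℕ) :=
      (Finset.sum_pair (f := fun i => (d i : ℕ)) huv).symm
    rw [h1]
    exact le_of_le_of_eq (Finset.sum_le_sum_of_subset (Finset.subset_univ _)) hPd.1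
  -- the correction sum vanishes
  have corr : ∑ d ∈ Finset.univ.filter (fun d : Fin k → Fin (m+1) => Pd k m d),
      (if (d u : ℕ) ≠ 0 then T d else 0) = 0 := by
    rw [← Finset.sum_filter]
    set S := (Finset.univ.filter (fun d : Fin k → Fin (m+1) => Pd k m d)).filter
      (fun d => (d u : ℕ) ≠ 0) with hS
    have hmem : ∀ d, d ∈ S → Pd k m d ∧ (d u : ℕ) ≠ 0 := by
      intro d hd
      rw [hS, Finset.mem_filter, Finset.mem_filter] at hd
      exact ⟨hd.1.2, hd.2⟩
    have hne1 : ∀ d, d ∈ S → ¬((d u : ℕ) = 1 ∧ (d v : ℕ) = 0) := by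
      intro d hd hc
      exact counting hj huv (fun i => (d i : ℕ)) (hm ▸ (hmem d hd).1.1)
        (hmem d hd).1.2 hc.1 hc.2
    have PR := fun d (hd : d ∈ S) =>
      iot_props huv d (hle d (hmem d hd).1) (hmem d hd).1.2 (hmem d hd).2 (hne1 d hd)
    refine Finset.sum_involution (fun d hd => iot u v d (hle d (hmem d hd).1))
      ?_ ?_ ?_ ?_
    · -- sums to zero
      intro d hd
      show T d + T (iot u v d (hle d (hmem d hd).1)) = 0
      have hTT : T (iot u v d (hle d (hmem d hd).1)) = T d := by
        rw [hT]
        refine Finset.prod_congr rfl fun i _ => ?_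
        congr 1
        by_cases hiu : i = u
        · rw [if_pos hiu, if_pos hiu]
        by_cases hiv : i = v
        · rw [if_neg hiu, if_pos hiv, if_neg hiu, if_pos hiv, (PR d hd).1]
        · rw [if_neg hiu, if_neg hiv, if_neg hiu, if_neg hiv,
            iot_apply_ne u v d _ hiu hiv]
      rw [hTT]
      exact CharTwo.add_self_eq_zero _
    · -- not fixed
      intro d hd _ hEq
      exact (PR d hd).2.2.2.1 (congrFun hEq v)
    · -- membership
      intro d hd
      show iot u v d (hle d (hmem d hd).1) ∈ S
      rw [hS, Finset.mem_filter, Finset.mem_filter]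
      refine ⟨⟨Finset.mem_univ _, ?_, (PR d hd).2.1⟩, (PR d hd).2.2.1⟩
      rw [sum_pair_congr huv _ (fun i => (d i : ℕ))
        (fun i hiu hiv => congrArg Fin.val (iot_apply_ne u v d _ hiu hiv)) (PR d hd).1]
      exact (hmem d hd).1.1
    · -- involutive
      intro d hd
      exact (PR d hd).2.2.2.2 _
  -- assemble
  rw [hG, map_sum]
  refine Eq.trans (Finset.sum_congr rfl step) ?_
  rw [Finset.sum_add_distrib, corr, add_zero]


lemma subst_comp (k : ℕ) (M N : Matrix (Fin k) (Fin k) (ZMod 2))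
    (p : MvPolynomial (Fin k) (ZMod 2)) :
    aeval (fun i => ∑ j', C (N i j') * X j')
        (aeval (fun i => ∑ j', C (M i j') * X j') p)
      = aeval (fun i => ∑ j', C ((M * N) i j') * X j') p := by
  rw [← AlgHom.comp_apply, comp_aeval]
  have hfn : (fun i => (aeval fun i => ∑ j', C (N i j') * X j') (∑ j', C (M i j') * X j'))
      = fun i => ∑ j', C ((M * N) i j') * X j' := by
    funext i
    rw [map_sum]
    calc ∑ j', (aeval fun i => ∑ j', C (N i j') * X j') (C (M i j') * X j')
        = ∑ j', ∑ l, C (M i j') * (C (N j' l) * X l) := by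
          refine Finset.sum_congr rfl fun j' _ => ?_
          rw [map_mul, aeval_C, aeval_X, algebraMap_eq, Finset.mul_sum]
      _ = ∑ l, ∑ j', C (M i j' * N j' l) * X l := by
          rw [Finset.sum_comm]
          refine Finset.sum_congr rfl fun l _ => Finset.sum_congr rfl fun j' _ => ?_
          rw [C_mul, mul_assoc]
      _ = ∑ l, C ((M * N) i l) * X l := by
          refine Finset.sum_congr rfl fun l _ => ?_
          rw [← Finset.sum_mul, ← map_sum, Matrix.mul_apply]
  rw [hfn]

lemma diag_subst (k : ℕ) (Dg : Fin k → ZMod 2) (hD : ∀ i, Dg i ≠ 0)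
    (p : MvPolynomial (Fin k) (ZMod 2)) :
    aeval (fun i => ∑ j', C ((Matrix.diagonal Dg) i j') * X j') p = p := by
  have hone : ∀ x : ZMod 2, x ≠ 0 → x = 1 := by decide
  have hfun : (fun i => ∑ j', C ((Matrix.diagonal Dg) i j') * X j')
      = (X : Fin k → MvPolynomial (Fin k) (ZMod 2)) := by
    funext i
    rw [Finset.sum_eq_single i]
    · rw [Matrix.diagonal_apply_eq, hone _ (hD i), map_one, one_mul]
    · intro b _ hb
      rw [Matrix.diagonal_apply_ne _ (Ne.symm hb), map_zero, zero_mul]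
    · intro h; exact absurd (Finset.mem_univ i) h
  rw [hfun, aeval_X_left_apply]

lemma transvec_subst {k j : ℕ} (hj : j < k)
    (t : Matrix.TransvectionStruct (Fin k) (ZMod 2)) :
    aeval (fun i => ∑ j', C (t.toMatrix i j') * X j') (G k (2 ^ k - 2 ^ j))
      = G k (2 ^ k - 2 ^ j) := by
  obtain ⟨ti, tj, hij, c⟩ := t
  have h1 : ∀ i : Fin k, (∑ j', C ((1 : Matrix (Fin k) (Fin k) (ZMod 2)) i j') * X j')
      = (X i : MvPolynomial (Fin k) (ZMod 2)) := by
    intro i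
    rw [Finset.sum_eq_single i]
    · rw [Matrix.one_apply_eq, map_one, one_mul]
    · intro b _ hb
      rw [Matrix.one_apply_ne (Ne.symm hb), map_zero, zero_mul]
    · intro h; exact absurd (Finset.mem_univ i) h
  have h2 : ∀ i : Fin k, (∑ j', C ((Matrix.single ti tj c) i j') * X j')
      = if i = ti then C c * X tj else (0 : MvPolynomial (Fin k) (ZMod 2)) := by
    intro i
    rw [Finset.sum_eq_single tj]
    · by_cases hi : i = ti
      · rw [if_pos hi, hi, Matrix.single_apply_same]
      · have hz : Matrix.single ti tj c i tj = 0 :=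
          Matrix.single_apply_of_ne ti tj c i tj (fun hc => hi hc.1.symm)
        rw [if_neg hi, hz, map_zero, zero_mul]
    · intro b _ hb
      have hz : Matrix.single ti tj c i b = 0 :=
        Matrix.single_apply_of_ne ti tj c i b (fun hc => hb hc.2.symm)
      rw [hz, map_zero, zero_mul]
    · intro h; exact absurd (Finset.mem_univ tj) h
  have hfun : (fun i => ∑ j', C ((Matrix.TransvectionStruct.mk ti tj hij c).toMatrix i j') * X j')
      = fun i : Fin k => X i + (if i = ti then C c * X tj else 0) := by
    funext i
    rw [Matrix.TransvectionStruct.toMatrix_mk, Matrix.transvection]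
    calc ∑ j', C ((1 + Matrix.single ti tj c) i j') * X j'
        = ∑ j', (C ((1 : Matrix (Fin k) (Fin k) (ZMod 2)) i j') * X j'
            + C ((Matrix.single ti tj c) i j') * X j') := by
          refine Finset.sum_congr rfl fun j' _ => ?_
          rw [Matrix.add_apply, map_add, add_mul]
      _ = _ := by rw [Finset.sum_add_distrib, h1, h2]
  rw [hfun]
  rcases (show ∀ x : ZMod 2, x = 0 ∨ x = 1 by decide) c with rfl | rfl
  · have : (fun i : Fin k => X i + (if i = ti then C (0 : ZMod 2) * X tj else 0))
        = (X : Fin k → MvPolynomial (Fin k) (ZMod 2)) := by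
      funext i
      split_ifs <;> simp
    rw [this, aeval_X_left_apply]
  · have : (fun i : Fin k => X i + (if i = ti then C (1 : ZMod 2) * X tj else 0))
        = fun a : Fin k => if a = ti then (X ti + X tj : MvPolynomial (Fin k) (ZMod 2))
            else X a := by
      funext i
      by_cases hi : i = ti
      · rw [if_pos hi, if_pos hi, hi, map_one, one_mul]
      · rw [if_neg hi, if_neg hi, add_zero]
    rw [this]
    exact core hj hij


end Stmt13Aux

open Stmt13Aux in
theorem stmt13 (k j : ℕ) (hk : 1 ≤ k) (hj : j ≤ k - 1)
    (A : Matrix (Fin k) (Fin k) (ZMod 2)) (hA : IsUnit A.det) :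
    aeval (fun i => ∑ j', C (A i j') * X j') (G k (2 ^ k - 2 ^ j)) =
      G k (2 ^ k - 2 ^ j) := by
  have hjk : j < k := by omega
  have hdet : A.det ≠ 0 := IsUnit.ne_zero hA
  refine Matrix.diagonal_transvection_induction
    (P := fun M => aeval (fun i => ∑ j', C (M i j') * X j') (G k (2 ^ k - 2 ^ j))
      = G k (2 ^ k - 2 ^ j)) A ?_ ?_ ?_
  · intro Dg hDg
    refine diag_subst k Dg (fun i => ?_) _
    intro h0
    rw [Matrix.det_diagonal] at hDg
    exact hdet (by rw [← hDg]; exact Finset.prod_eq_zero (Finset.mem_univ i) h0)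
  · intro t
    exact transvec_subst hjk t
  · intro M N hM hN
    rw [← subst_comp, hM, hN]
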